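/- The Fourier–Stieltjes coefficients of the weak limit measure μ are given by μ̂(k) = ∏_{m≥1} (1/3)(1 + 2 cos(2πk / 2^m)) for every k ∈ ℤ. -/

import Mathlib

open MeasureTheory Filter Topology Real
open scoped ENNReal

noncomputable section

/-- Stern's diatomic sequence: s(0)=0, s(1)=1, s(2n)=s(n), s(2n+1)=s(n)+s(n+1). -/
def stern : ℕ → ℕ
  | 0 => 0
  | 1 => 1
  | n + 2 =>
    if h : n % 2 = 0 then stern (n / 2 + 1)
    else stern (n / 2 + 1) + stern (n / 2 + 2)
decreasing_by all_goals omega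
/-- The probability measure μ_n = 3^{-n} ∑_{m=0}^{2^n-1} s(2^n+m) δ_{m/2^n} on the 1-torus. -/
def sternMeasure (n : ℕ) : Measure UnitAddCircle :=
  ((3 : ℝ≥0∞) ^ n)⁻¹ • ∑ m ∈ Finset.range (2 ^ n),
    (stern (2 ^ n + m) : ℝ≥0∞) • Measure.dirac ((m / 2 ^ n : ℝ) : UnitAddCircle)
/-- The Fourier–Stieltjes coefficient ν̂(k) = ∫_𝕋 e^{-2πikx} dν(x) of a measure ν on the 1-torus. -/
def fourierCoeffMeasure (ν : Measure UnitAddCircle) (k : ℤ) : ℂ :=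
  ∫ x, fourier (-k) x ∂ν

lemma stern_two_mul (n : ℕ) (h : 1 ≤ n) : stern (2 * n) = stern n := by
  obtain ⟨m, rfl⟩ : ∃ m, n = m + 1 := ⟨n - 1, by omega⟩
  rw [show 2 * (m + 1) = 2 * m + 2 by ring, stern]
  simp [Nat.mul_mod_right, Nat.mul_div_cancel_left]

lemma stern_two_mul_add_one (n : ℕ) (h : 1 ≤ n) :
    stern (2 * n + 1) = stern n + stern (n + 1) := by
  obtain ⟨m, rfl⟩ : ∃ m, n = m + 1 := ⟨n - 1, by omega⟩
  rw [show 2 * (m + 1) + 1 = (2 * m + 1) + 2 by ring, stern]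
  have h1 : (2 * m + 1) % 2 = 1 := by omega
  have h2 : (2 * m + 1) / 2 = m := by omega
  simp [h1, h2]

lemma stern_two_pow (n : ℕ) : stern (2 ^ n) = 1 := by
  induction n with
  | zero => simp [stern]
  | succ n ih => rw [pow_succ, mul_comm, stern_two_mul _ Nat.one_le_two_pow, ih]

lemma sum_range_two_mul {M : Type*} [AddCommMonoid M] (f : ℕ → M) (n : ℕ) :
    ∑ i ∈ Finset.range (2 * n), f i
      = ∑ i ∈ Finset.range n, f (2 * i) + ∑ i ∈ Finset.range n, f (2 * i + 1) := by
  induction n with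
  | zero => simp
  | succ n ih =>
    rw [show 2 * (n + 1) = (2 * n + 1) + 1 by ring, Finset.sum_range_succ, Finset.sum_range_succ,
      ih, Finset.sum_range_succ, Finset.sum_range_succ]
    abel

lemma exp_theta_add_inv (θ : ℝ) :
    Complex.exp (θ * Complex.I) + (Complex.exp (θ * Complex.I))⁻¹
      = ((2 * Real.cos θ : ℝ) : ℂ) := by
  rw [← Complex.exp_neg, ← neg_mul, ← Complex.ofReal_neg, Complex.exp_mul_I, Complex.exp_mul_I,
    ← Complex.ofReal_cos, ← Complex.ofReal_sin, ← Complex.ofReal_cos, ← Complex.ofReal_sin,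
    Real.cos_neg, Real.sin_neg]
  push_cast
  ring_nf

/-- ω_n := e^{-2πik/2^n} -/
def omg (k : ℤ) (n : ℕ) : ℂ := Complex.exp (-(2 * π * Complex.I * k) / 2 ^ n)

lemma omg_ne_zero (k : ℤ) (n : ℕ) : omg k n ≠ 0 := Complex.exp_ne_zero _

lemma omg_sq (k : ℤ) (n : ℕ) : (omg k (n + 1)) ^ 2 = omg k n := by
  rw [omg, omg, sq, ← Complex.exp_add]
  congr 1
  have h2 : (2:ℂ) ^ (n+1) ≠ 0 := pow_ne_zero _ two_ne_zero
  have h2' : (2:ℂ) ^ n ≠ 0 := pow_ne_zero _ two_ne_zero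
  rw [← add_div, div_eq_div_iff h2 h2']
  ring

lemma omg_pow_two_pow (k : ℤ) (n : ℕ) : (omg k n) ^ (2 ^ n : ℕ) = 1 := by
  rw [omg, ← Complex.exp_nat_mul _ (2^n), show ((2^n : ℕ) : ℂ) = (2:ℂ)^n by push_cast; ring]
  have h2 : (2:ℂ)^n ≠ 0 := pow_ne_zero _ two_ne_zero
  rw [show (2:ℂ)^n * (-(2 * π * Complex.I * k) / 2 ^ n) = ((-k : ℤ) : ℂ) * (2 * π * Complex.I) by
    rw [mul_comm, div_mul_cancel₀ _ h2]; push_cast; ring]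
  exact Complex.exp_int_mul_two_pi_mul_I (-k)

lemma one_add_omg_add_inv (k : ℤ) (n : ℕ) :
    1 + omg k n + (omg k n)⁻¹
      = ((1 + 2 * Real.cos (2 * π * (k:ℝ) / 2 ^ n) : ℝ) : ℂ) := by
  have hθ : (-(2 * π * Complex.I * k) / 2 ^ n)
      = ((-(2 * π * (k:ℝ) / 2 ^ n) : ℝ) : ℂ) * Complex.I := by
    have h2 : (2:ℂ)^n ≠ 0 := pow_ne_zero _ two_ne_zero
    push_cast
    field_simp
  rw [omg, hθ, add_assoc, exp_theta_add_inv, Real.cos_neg]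
  push_cast
  ring

/-- The key identity: the Stern exponential sum factorizes. -/
lemma sternSum_eq (k : ℤ) (n : ℕ) :
    ∑ m ∈ Finset.range (2 ^ n), (stern (2 ^ n + m) : ℂ) * (omg k n) ^ m
      = ∏ m ∈ Finset.Icc 1 n, ((1 + 2 * Real.cos (2 * π * (k:ℝ) / 2 ^ m) : ℝ) : ℂ) := by
  induction n with
  | zero => simp [stern]
  | succ n ih =>
    set A := ∑ m ∈ Finset.range (2 ^ n), (stern (2 ^ n + m) : ℂ) * (omg k n) ^ m with hAdef
    set B := ∑ j ∈ Finset.range (2 ^ n), (stern (2 ^ n + j + 1) : ℂ) * (omg k n) ^ j with hBdef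
    have hA : ∑ j ∈ Finset.range (2 ^ n), (stern (2 ^ n + (j + 1)) : ℂ) * (omg k n) ^ (j + 1)
        = A := by
      have h1 := Finset.sum_range_succ' (fun m => (stern (2 ^ n + m) : ℂ) * (omg k n) ^ m) (2 ^ n)
      have h2 := Finset.sum_range_succ (fun m => (stern (2 ^ n + m) : ℂ) * (omg k n) ^ m) (2 ^ n)
      rw [h2] at h1
      have e1 : (stern (2 ^ n + 2 ^ n) : ℂ) * (omg k n) ^ (2 ^ n : ℕ) = 1 := by
        rw [show 2 ^ n + 2 ^ n = 2 ^ (n + 1) by ring, stern_two_pow, omg_pow_two_pow]; simp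
      have e0 : (stern (2 ^ n + 0) : ℂ) * (omg k n) ^ (0 : ℕ) = 1 := by
        simp [stern_two_pow]
      rw [e1, e0] at h1
      linear_combination -h1
    have hB : B * omg k n = A := by
      rw [hBdef, Finset.sum_mul, ← hA]
      apply Finset.sum_congr rfl
      intro j _
      rw [show 2 ^ n + (j + 1) = 2 ^ n + j + 1 by ring, pow_succ]
      ring
    have key : 1 ≤ 2 ^ n := Nat.one_le_two_pow
    rw [show (2:ℕ) ^ (n + 1) = 2 * 2 ^ n by ring,
      sum_range_two_mul (fun m => (stern (2 * 2 ^ n + m) : ℂ) * (omg k (n+1)) ^ m) (2 ^ n)]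
    have e1 : ∀ j ∈ Finset.range (2 ^ n),
        (stern (2 * 2 ^ n + 2 * j) : ℂ) * omg k (n+1) ^ (2 * j)
          = (stern (2 ^ n + j) : ℂ) * (omg k n) ^ j := by
      intro j _
      rw [show 2 * 2 ^ n + 2 * j = 2 * (2 ^ n + j) by ring,
        stern_two_mul _ (le_trans key (Nat.le_add_right _ _)), pow_mul, omg_sq]
    have e2 : ∀ j ∈ Finset.range (2 ^ n),
        (stern (2 * 2 ^ n + (2 * j + 1)) : ℂ) * omg k (n+1) ^ (2 * j + 1)
          = ((stern (2 ^ n + j) : ℂ) + (stern (2 ^ n + j + 1) : ℂ))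
              * ((omg k n) ^ j * omg k (n+1)) := by
      intro j _
      rw [show 2 * 2 ^ n + (2 * j + 1) = 2 * (2 ^ n + j) + 1 by ring,
        stern_two_mul_add_one _ (le_trans key (Nat.le_add_right _ _)),
        pow_succ, pow_mul, omg_sq]
      push_cast
      ring
    rw [Finset.sum_congr rfl e1, Finset.sum_congr rfl e2, ← hAdef]
    have expand : ∑ j ∈ Finset.range (2 ^ n),
        ((stern (2 ^ n + j) : ℂ) + (stern (2 ^ n + j + 1) : ℂ))
          * ((omg k n) ^ j * omg k (n+1)) = (A + B) * omg k (n+1) := by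
      rw [add_mul, Finset.sum_mul, Finset.sum_mul, ← Finset.sum_add_distrib]
      apply Finset.sum_congr rfl
      intro j _
      ring
    rw [expand]
    have hstep : A + (A + B) * omg k (n+1)
        = A * (1 + omg k (n+1) + (omg k (n+1))⁻¹) := by
      have hBA : B = A * (omg k n)⁻¹ := by
        rw [← hB, mul_assoc, mul_inv_cancel₀ (omg_ne_zero k n), mul_one]
      rw [hBA, ← omg_sq k n]
      have hne := omg_ne_zero k (n+1)
      field_simp
      ring
    rw [hstep, one_add_omg_add_inv k (n+1), ih,
      Finset.prod_Icc_succ_top (by omega : 1 ≤ n + 1)]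

lemma continuous_integrable {E : Type*} [NormedAddCommGroup E] [NormedSpace ℝ E]
    {f : UnitAddCircle → E} (hf : Continuous f) (ν : Measure UnitAddCircle)
    [IsFiniteMeasure ν] : Integrable f ν :=
  hf.integrable_of_hasCompactSupport (isClosed_tsupport f).isCompact

instance isFiniteMeasure_sternMeasure (n : ℕ) : IsFiniteMeasure (sternMeasure n) := by
  constructor
  rw [sternMeasure, Measure.smul_apply, Measure.finset_sum_apply]
  simp only [Measure.smul_apply, smul_eq_mul, measure_univ, mul_one]
  apply ENNReal.mul_lt_top
  · exact ENNReal.inv_lt_top.2 (by positivity)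
  · exact ENNReal.sum_lt_top.2 fun i _ => ENNReal.natCast_lt_top _

lemma fourier_point (k : ℤ) (n m : ℕ) :
    fourier (-k) (((m : ℝ) / 2 ^ n : ℝ) : UnitAddCircle) = (omg k n) ^ m := by
  rw [fourier_coe_apply, omg, ← Complex.exp_nat_mul]
  congr 1
  have h2 : (2:ℂ) ^ n ≠ 0 := pow_ne_zero _ two_ne_zero
  push_cast
  field_simp

lemma integral_fourier_sternMeasure (k : ℤ) (n : ℕ) :
    ∫ x, fourier (-k) x ∂(sternMeasure n)
      = ((∏ m ∈ Finset.Icc 1 n,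
          (1 / 3) * (1 + 2 * Real.cos (2 * π * (k : ℝ) / 2 ^ m)) : ℝ) : ℂ) := by
  have hcont : Continuous fun x : UnitAddCircle => (fourier (-k)) x := map_continuous _
  have hsm : StronglyMeasurable fun x : UnitAddCircle => (fourier (-k)) x :=
    hcont.stronglyMeasurable
  rw [sternMeasure, integral_smul_measure, integral_finset_sum_measure (by
    intro m _
    exact (continuous_integrable hcont _).smul_measure (ENNReal.natCast_ne_top _))]
  have hpt : ∀ m ∈ Finset.range (2 ^ n),
      ∫ x, fourier (-k) x ∂((stern (2 ^ n + m) : ℝ≥0∞)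
          • Measure.dirac (((m : ℝ) / 2 ^ n : ℝ) : UnitAddCircle))
        = (stern (2 ^ n + m) : ℂ) * (omg k n) ^ m := by
    intro m _
    rw [integral_smul_measure, integral_dirac' _ _ hsm, fourier_point]
    simp
  rw [Finset.sum_congr rfl hpt, sternSum_eq]
  rw [ENNReal.toReal_inv, ENNReal.toReal_pow]
  norm_num
  rw [Finset.prod_mul_distrib, Finset.prod_const, Nat.card_Icc]
  push_cast
  rw [one_div, inv_pow]

/-- For the weak limit μ of (μ_n), the Fourier–Stieltjes coefficients are given by the
convergent infinite product μ̂(k) = ∏_{m≥1} (1/3)(1 + 2 cos(2πk/2^m)). -/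
theorem fourierCoeff_limit_eq_prod (μ : Measure UnitAddCircle)
    (hμ : IsProbabilityMeasure μ)
    (hlim : ∀ f : C(UnitAddCircle, ℝ),
      Tendsto (fun n => ∫ x, f x ∂(sternMeasure n)) atTop (𝓝 (∫ x, f x ∂μ)))
    (k : ℤ) :
    Tendsto
      (fun n => ((∏ m ∈ Finset.Icc 1 n,
        (1 / 3) * (1 + 2 * Real.cos (2 * π * (k : ℝ) / 2 ^ m)) : ℝ) : ℂ))
      atTop (𝓝 (fourierCoeffMeasure μ k)) := by
  have hcont : Continuous fun x : UnitAddCircle => (fourier (-k)) x := map_continuous _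
  have key : ∀ (ν : Measure UnitAddCircle), IsFiniteMeasure ν →
      (∫ x, ((fourier (-k)) x).re ∂ν = (∫ x, (fourier (-k)) x ∂ν).re
        ∧ ∫ x, ((fourier (-k)) x).im ∂ν = (∫ x, (fourier (-k)) x ∂ν).im) := by
    intro ν hν
    constructor
    · simpa using integral_re (𝕜 := ℂ) (continuous_integrable hcont ν)
    · simpa using integral_im (𝕜 := ℂ) (continuous_integrable hcont ν)
  let fre : C(UnitAddCircle, ℝ) := ⟨fun x => ((fourier (-k)) x).re, Complex.continuous_re.comp hcont⟩
  let fim : C(UnitAddCircle, ℝ) := ⟨fun x => ((fourier (-k)) x).im, Complex.continuous_im.comp hcont⟩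
  have hre : Tendsto (fun n => (∫ x, (fourier (-k)) x ∂sternMeasure n).re) atTop
      (𝓝 ((∫ x, (fourier (-k)) x ∂μ).re)) := by
    have h := hlim fre
    simp only [fre, ContinuousMap.coe_mk] at h
    rw [(key μ (by infer_instance : IsFiniteMeasure μ)).1] at h
    exact h.congr fun n => (key _ (isFiniteMeasure_sternMeasure n)).1
  have him : Tendsto (fun n => (∫ x, (fourier (-k)) x ∂sternMeasure n).im) atTop
      (𝓝 ((∫ x, (fourier (-k)) x ∂μ).im)) := by
    have h := hlim fim
    simp only [fim, ContinuousMap.coe_mk] at h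
    rw [(key μ (by infer_instance : IsFiniteMeasure μ)).2] at h
    exact h.congr fun n => (key _ (isFiniteMeasure_sternMeasure n)).2
  have hcomb : Tendsto (fun n => ∫ x, (fourier (-k)) x ∂sternMeasure n) atTop
      (𝓝 (∫ x, (fourier (-k)) x ∂μ)) := by
    have h := ((Complex.continuous_ofReal.tendsto _).comp hre).add
      (((Complex.continuous_ofReal.tendsto _).comp him).mul_const Complex.I)
    simpa [Function.comp_def, Complex.re_add_im] using h
  exact hcomb.congr fun n => integral_fourier_sternMeasure k n
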